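/- Let φ be any norm on ℝ^d, let Σ be a positive definite d×d real matrix with centered Gaussian measure μ_Σ, let c > 0, and let τ satisfy 0 < τ < μ_Σ{ω : φ(ω) ≤ c}. Define Γ_mf(x) := inf{s ∈ [0, ∞) : μ_Σ{ω : φ(ω + s·x) ≤ c} ≤ τ} (with inf of the empty set equal to ∞). Then Γ_mf is quasi-concave: for every a ∈ [0, ∞], the superlevel set {x ∈ ℝ^d : Γ_mf(x) ≥ a} is convex. -/

import Mathlib

open MeasureTheory Matrix Filter
open Set
open scoped ENNReal NNReal Pointwise

/-- Centered Gaussian density on `ℝ^d` with covariance matrix `S`: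
`f_S(x) = ((2π)^d det S)^(−1/2) · exp(−(1/2) xᵀ S⁻¹ x)`. -/
noncomputable def gaussDensity {d : ℕ} (S : Matrix (Fin d) (Fin d) ℝ) (x : Fin d → ℝ) : ℝ :=
  (Real.sqrt ((2 * Real.pi) ^ d * S.det))⁻¹ *
    Real.exp (-(1 / 2) * (x ⬝ᵥ (S⁻¹ *ᵥ x)))

/-- Centered Gaussian measure on `ℝ^d`: the measure with density `gaussDensity S`
with respect to Lebesgue measure. -/
noncomputable def gaussMeasure {d : ℕ} (S : Matrix (Fin d) (Fin d) ℝ) :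
    Measure (Fin d → ℝ) :=
  volume.withDensity fun x => ENNReal.ofReal (gaussDensity S x)

/-- `φ` is a norm on `ℝ^d`: point-separating, absolutely homogeneous, subadditive. -/
structure IsNorm {d : ℕ} (φ : (Fin d → ℝ) → ℝ) : Prop where
  eq_zero : ∀ x, φ x = 0 → x = 0
  smul : ∀ (a : ℝ) (x : Fin d → ℝ), φ (a • x) = |a| * φ x
  triangle : ∀ x y : Fin d → ℝ, φ (x + y) ≤ φ x + φ y

/-- The multiplicative factor measure
`Γ_mf(x) = inf{s ∈ [0,∞) : μ_Σ{ω : φ(ω + s·x) ≤ c} ≤ τ}`, with the infimum taken in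
`[0,∞]` (so `inf ∅ = ∞`). -/
noncomputable def gammaMF {d : ℕ} (φ : (Fin d → ℝ) → ℝ) (S : Matrix (Fin d) (Fin d) ℝ)
    (c τ : ℝ) (x : Fin d → ℝ) : ℝ≥0∞ :=
  sInf (ENNReal.ofReal ''
    {s : ℝ | 0 ≤ s ∧ gaussMeasure S {ω : Fin d → ℝ | φ (ω + s • x) ≤ c} ≤ ENNReal.ofReal τ})


lemma rpow_iSup_le {u : ℕ → ℝ≥0∞} {c : ℝ} (hc : 0 < c) {R : ℝ≥0∞}
    (h : ∀ k, u k ^ c ≤ R) : (⨆ k, u k) ^ c ≤ R := by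
  have h1 : ∀ k, u k ≤ R ^ (1/c) := by
    intro k
    have := ENNReal.rpow_le_rpow (h k) (le_of_lt (by positivity : (0:ℝ) < 1/c))
    rwa [← ENNReal.rpow_mul, mul_one_div, div_self hc.ne', ENNReal.rpow_one] at this
  have h2 : (⨆ k, u k) ≤ R ^ (1/c) := iSup_le h1
  calc (⨆ k, u k) ^ c ≤ (R ^ (1/c)) ^ c := ENNReal.rpow_le_rpow h2 hc.le
    _ = R := by rw [← ENNReal.rpow_mul, one_div, inv_mul_cancel₀ hc.ne', ENNReal.rpow_one]

lemma geom_le_arith {t : ℝ} (ht : 0 < t) (ht1 : t < 1) (a b : ℝ≥0∞) :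
    a ^ (1 - t) * b ^ t ≤ ENNReal.ofReal (1 - t) * a + ENNReal.ofReal t * b := by
  rcases eq_or_ne a ⊤ with rfl | ha
  · have : ENNReal.ofReal (1 - t) * ⊤ = ⊤ := by
      rw [ENNReal.mul_top]; simp [ENNReal.ofReal_eq_zero]; linarith
    rw [this]; exact le_top.trans_eq (top_add _).symm
  rcases eq_or_ne b ⊤ with rfl | hb
  · have : ENNReal.ofReal t * ⊤ = ⊤ := by
      rw [ENNReal.mul_top]; simp [ENNReal.ofReal_eq_zero]; linarith
    rw [this, add_top]; exact le_top
  lift a to ℝ≥0 using ha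
  lift b to ℝ≥0 using hb
  have key := NNReal.geom_mean_le_arith_mean2_weighted ((1-t).toNNReal) (t.toNNReal) a b ?_
  · have e1 : ((1-t).toNNReal : ℝ) = 1 - t := Real.coe_toNNReal _ (by linarith)
    have e2 : ((t).toNNReal : ℝ) = t := Real.coe_toNNReal _ ht.le
    rw [e1, e2] at key
    calc (a:ℝ≥0∞) ^ (1-t) * (b:ℝ≥0∞) ^ t
        = ((a ^ (1-t) * b ^ t : ℝ≥0) : ℝ≥0∞) := by
          rw [ENNReal.coe_mul, ENNReal.coe_rpow_of_nonneg _ (by linarith),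
            ENNReal.coe_rpow_of_nonneg _ ht.le]
      _ ≤ (((1-t).toNNReal * a + t.toNNReal * b : ℝ≥0) : ℝ≥0∞) := by
          exact_mod_cast key
      _ = ENNReal.ofReal (1 - t) * a + ENNReal.ofReal t * b := by
          rw [ENNReal.coe_add, ENNReal.coe_mul, ENNReal.coe_mul]; rfl
  · ext1
    rw [NNReal.coe_add, Real.coe_toNNReal _ (by linarith), Real.coe_toNNReal _ ht.le]
    norm_num

-- translate-of-scaled-set measure
lemma vol_affine (v : ℝ) (r : ℝ) (hr : 0 < r) (B : Set ℝ) :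
    volume (v +ᵥ (r • B)) = ENNReal.ofReal r * volume B := by
  rw [measure_vadd, Measure.addHaar_smul]
  congr 1
  simp [abs_of_pos hr]

lemma bm_compact {K₁ K₂ : Set ℝ} (h₁ : IsCompact K₁) (h₂ : IsCompact K₂)
    (hne₁ : K₁.Nonempty) (hne₂ : K₂.Nonempty) {p q : ℝ} (hp : 0 < p) (hq : 0 < q)
    {C : Set ℝ} (hsub : ∀ a ∈ K₁, ∀ b ∈ K₂, p * a + q * b ∈ C) :
    ENNReal.ofReal p * volume K₁ + ENNReal.ofReal q * volume K₂ ≤ volume C := by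
  set X : Set ℝ := p • K₁ with hX
  set Y : Set ℝ := q • K₂ with hY
  have hXc : IsCompact X := h₁.smul p
  have hYc : IsCompact Y := h₂.smul q
  have hXne : X.Nonempty := hne₁.smul_set
  have hYne : Y.Nonempty := hne₂.smul_set
  obtain ⟨u, hu⟩ : ∃ u, u = sSup X := ⟨_, rfl⟩
  obtain ⟨v, hv⟩ : ∃ v, v = sInf Y := ⟨_, rfl⟩
  have huX : u ∈ X := hu ▸ hXc.sSup_mem hXne
  have hvY : v ∈ Y := hv ▸ hYc.sInf_mem hYne
  -- the two translates
  have hsub1 : (v +ᵥ X) ⊆ C := by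
    rintro - ⟨ξ, hξ, rfl⟩
    obtain ⟨a, ha, rfl⟩ := hξ
    obtain ⟨b, hb, rfl⟩ := hvY
    simpa [smul_eq_mul, add_comm] using hsub a ha b hb
  have hsub2 : (u +ᵥ Y) ⊆ C := by
    rintro - ⟨η, hη, rfl⟩
    obtain ⟨b, hb, rfl⟩ := hη
    obtain ⟨a, ha, rfl⟩ := huX
    simpa [smul_eq_mul] using hsub a ha b hb
  have hinter : (v +ᵥ X) ∩ (u +ᵥ Y) ⊆ {u + v} := by
    rintro z ⟨⟨ξ, hξ, rfl⟩, ⟨η, hη, he⟩⟩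
    have h1 : ξ ≤ u := hu ▸ le_csSup hXc.bddAbove hξ
    have h2 : v ≤ η := hv ▸ csInf_le hYc.bddBelow hη
    simp only [vadd_eq_add] at he
    have : v + ξ = u + v := by linarith
    simp only [vadd_eq_add, this, mem_singleton_iff]
  have hmeas2 : MeasurableSet (u +ᵥ Y) :=
    (hYc.vadd u).isClosed.measurableSet
  have hion : volume ((v +ᵥ X) ∩ (u +ᵥ Y)) = 0 :=
    measure_mono_null hinter (measure_singleton _)
  have hun := measure_union_add_inter (μ := volume) (v +ᵥ X) hmeas2
  rw [hion, add_zero] at hun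
  calc ENNReal.ofReal p * volume K₁ + ENNReal.ofReal q * volume K₂
      = volume (v +ᵥ X) + volume (u +ᵥ Y) := by
        rw [hX, hY, vol_affine _ _ hp, vol_affine _ _ hq]
    _ = volume ((v +ᵥ X) ∪ (u +ᵥ Y)) := hun.symm
    _ ≤ volume C := measure_mono (union_subset hsub1 hsub2)

lemma bm_one_dim {A B C : Set ℝ} (hA : MeasurableSet A) (hB : MeasurableSet B)
    (hAne : A.Nonempty) (hBne : B.Nonempty) {p q : ℝ} (hp : 0 < p) (hq : 0 < q)
    (hsub : ∀ a ∈ A, ∀ b ∈ B, p * a + q * b ∈ C) :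
    ENNReal.ofReal p * volume A + ENNReal.ofReal q * volume B ≤ volume C := by
  rcases eq_or_ne (volume A) 0 with hA0 | hA0
  · obtain ⟨a₀, ha₀⟩ := hAne
    have hsub' : (p * a₀) +ᵥ (q • B) ⊆ C := by
      rintro - ⟨η, ⟨b, hb, rfl⟩, rfl⟩
      simpa [smul_eq_mul] using hsub a₀ ha₀ b hb
    calc ENNReal.ofReal p * volume A + ENNReal.ofReal q * volume B
        = volume ((p * a₀) +ᵥ (q • B)) := by rw [hA0, vol_affine _ _ hq]; simp
      _ ≤ volume C := measure_mono hsub'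
  rcases eq_or_ne (volume B) 0 with hB0 | hB0
  · obtain ⟨b₀, hb₀⟩ := hBne
    have hsub' : (q * b₀) +ᵥ (p • A) ⊆ C := by
      rintro - ⟨η, ⟨a, ha, rfl⟩, rfl⟩
      have := hsub a ha b₀ hb₀
      simpa [smul_eq_mul, add_comm] using this
    calc ENNReal.ofReal p * volume A + ENNReal.ofReal q * volume B
        = volume ((q * b₀) +ᵥ (p • A)) := by rw [hB0, vol_affine _ _ hp]; simp
      _ ≤ volume C := measure_mono hsub'
  -- both positive measure
  have step : ∀ r₁ r₂ : ℝ≥0∞, r₁ < volume A → r₂ < volume B →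
      ENNReal.ofReal p * r₁ + ENNReal.ofReal q * r₂ ≤ volume C := by
    intro r₁ r₂ h₁ h₂
    obtain ⟨K₁, hK₁A, hK₁c, hK₁⟩ := hA.exists_lt_isCompact h₁
    obtain ⟨K₂, hK₂B, hK₂c, hK₂⟩ := hB.exists_lt_isCompact h₂
    have hne₁ : K₁.Nonempty := by
      rcases K₁.eq_empty_or_nonempty with rfl | h
      · simp at hK₁
      · exact h
    have hne₂ : K₂.Nonempty := by
      rcases K₂.eq_empty_or_nonempty with rfl | h
      · simp at hK₂
      · exact h
    refine le_trans ?_ (bm_compact hK₁c hK₂c hne₁ hne₂ hp hq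
      (fun a ha b hb => hsub a (hK₁A ha) b (hK₂B hb)))
    gcongr

  have hBpos : (0:ℝ≥0∞) < volume B := pos_iff_ne_zero.mpr hB0
  have hApos : (0:ℝ≥0∞) < volume A := pos_iff_ne_zero.mpr hA0
  rcases eq_or_ne (volume A) ⊤ with hAt | hAt
  · have hC : volume C = ⊤ := by
      rw [eq_top_iff]
      have : (⊤:ℝ≥0∞) = ENNReal.ofReal p * ⨆ n : ℕ, (n:ℝ≥0∞) := by
        rw [ENNReal.iSup_natCast, ENNReal.mul_top (by simp [ENNReal.ofReal_eq_zero]; linarith)]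
      rw [this, ENNReal.mul_iSup]
      refine iSup_le fun n => ?_
      have := step n 0 (by rw [hAt]; exact ENNReal.natCast_lt_top n) hBpos
      simpa using this
    simp [hC]
  rcases eq_or_ne (volume B) ⊤ with hBt | hBt
  · have hC : volume C = ⊤ := by
      rw [eq_top_iff]
      have : (⊤:ℝ≥0∞) = ENNReal.ofReal q * ⨆ n : ℕ, (n:ℝ≥0∞) := by
        rw [ENNReal.iSup_natCast, ENNReal.mul_top (by simp [ENNReal.ofReal_eq_zero]; linarith)]
      rw [this, ENNReal.mul_iSup]
      refine iSup_le fun n => ?_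
      have := step 0 n hApos (by rw [hBt]; exact ENNReal.natCast_lt_top n)
      refine le_trans ?_ this
      simp [add_comm]
    simp [hC]
  refine ENNReal.le_of_forall_lt_one_mul_le fun a ha => ?_
  have h₁ : a * volume A < volume A := by
    conv_rhs => rw [← one_mul (volume A)]
    exact ENNReal.mul_lt_mul_left hA0 hAt ha
  have h₂ : a * volume B < volume B := by
    conv_rhs => rw [← one_mul (volume B)]
    exact ENNReal.mul_lt_mul_left hB0 hBt ha
  have hstep := step _ _ h₁ h₂
  refine le_trans (le_of_eq ?_) hstep
  ring

lemma layercake_ennreal {α : Type*} [MeasurableSpace α] (μ : Measure α) [SigmaFinite μ]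
    {F : α → ℝ≥0∞} (hF : Measurable F) :
    ∫⁻ x, F x ∂μ = ∫⁻ s in Set.Ioi (0:ℝ), μ {x | ENNReal.ofReal s < F x} := by
  have hset : MeasurableSet {p : ℝ × α | ENNReal.ofReal p.1 < F p.2} :=
    measurableSet_lt (ENNReal.measurable_ofReal.comp measurable_fst) (hF.comp measurable_snd)
  have hswap := lintegral_lintegral_swap (μ := volume.restrict (Set.Ioi (0:ℝ))) (ν := μ)
    (f := fun s x => ({p : ℝ × α | ENNReal.ofReal p.1 < F p.2}.indicator (fun _ => 1) (s, x)))
    ((measurable_one.indicator hset).aemeasurable)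
  have h1 : ∀ s : ℝ, ∫⁻ x, ({p : ℝ × α | ENNReal.ofReal p.1 < F p.2}.indicator
      (fun _ => (1:ℝ≥0∞)) (s, x)) ∂μ = μ {x | ENNReal.ofReal s < F x} := by
    intro s
    have he : (fun x => ({p : ℝ × α | ENNReal.ofReal p.1 < F p.2}.indicator
        (fun _ => (1:ℝ≥0∞)) (s, x))) = {x | ENNReal.ofReal s < F x}.indicator (fun _ => 1) := by
      funext x
      by_cases h : ENNReal.ofReal s < F x <;> simp [Set.indicator, h]
    rw [he]
    exact (lintegral_indicator (hF (measurableSet_Ioi (a := ENNReal.ofReal s))) fun _ => 1).trans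
      (setLIntegral_one _)
  have h2 : ∀ x : α, (∫⁻ s in Set.Ioi (0:ℝ),
      ({p : ℝ × α | ENNReal.ofReal p.1 < F p.2}.indicator (fun _ => (1:ℝ≥0∞)) (s, x))) = F x := by
    intro x
    have he : (fun s : ℝ => ({p : ℝ × α | ENNReal.ofReal p.1 < F p.2}.indicator
        (fun _ => (1:ℝ≥0∞)) (s, x))) = {s : ℝ | ENNReal.ofReal s < F x}.indicator (fun _ => 1) := by
      funext s
      by_cases h : ENNReal.ofReal s < F x <;> simp [Set.indicator, h]
    have hms : MeasurableSet {s : ℝ | ENNReal.ofReal s < F x} :=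
      ENNReal.measurable_ofReal (measurableSet_Iio (a := F x))
    rw [he]
    rw [(lintegral_indicator hms fun _ => (1:ℝ≥0∞)).trans (setLIntegral_one _),
      Measure.restrict_apply hms]
    rcases eq_or_ne (F x) ⊤ with htop | htop
    · have : {s : ℝ | ENNReal.ofReal s < F x} ∩ Set.Ioi 0 = Set.Ioi 0 := by
        apply Set.inter_eq_right.mpr
        intro s _
        simp [htop]
      rw [this, htop, Real.volume_Ioi]
    · have : {s : ℝ | ENNReal.ofReal s < F x} ∩ Set.Ioi 0 = Set.Ioo 0 (F x).toReal := by
        ext s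
        simp only [Set.mem_inter_iff, Set.mem_setOf_eq, Set.mem_Ioi, Set.mem_Ioo]
        constructor
        · rintro ⟨h1, h2⟩
          exact ⟨h2, (ENNReal.ofReal_lt_iff_lt_toReal h2.le htop).mp h1⟩
        · rintro ⟨h1, h2⟩
          exact ⟨(ENNReal.ofReal_lt_iff_lt_toReal h1.le htop).mpr h2, h1⟩
      rw [this, Real.volume_Ioo, sub_zero, ENNReal.ofReal_toReal htop]
  calc ∫⁻ x, F x ∂μ = ∫⁻ x, (∫⁻ s in Set.Ioi (0:ℝ),
        ({p : ℝ × α | ENNReal.ofReal p.1 < F p.2}.indicator (fun _ => (1:ℝ≥0∞)) (s, x))) ∂μ := by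
        refine lintegral_congr fun x => (h2 x).symm
    _ = ∫⁻ s in Set.Ioi (0:ℝ), μ {x | ENNReal.ofReal s < F x} := by
        rw [← hswap]
        exact lintegral_congr fun s => h1 s

lemma lintegral_Ioo_scale {c : ℝ} (hc : 0 < c) {g : ℝ → ℝ≥0∞} (hg : Measurable g) :
    ∫⁻ s in Set.Ioo (0:ℝ) c, g s = ENNReal.ofReal c * ∫⁻ σ in Set.Ioo (0:ℝ) 1, g (c * σ) := by
  have hmap := Real.map_volume_mul_left (ne_of_gt hc)
  have hpre : (fun x : ℝ => c * x) ⁻¹' (Set.Ioo 0 c) = Set.Ioo 0 1 := by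
    ext σ
    simp only [Set.mem_preimage, Set.mem_Ioo]
    constructor
    · rintro ⟨h1, h2⟩
      have hσ : 0 < σ := by nlinarith
      exact ⟨hσ, by nlinarith⟩
    · rintro ⟨h1, h2⟩
      exact ⟨by positivity, by nlinarith⟩
  have h1 : ∫⁻ σ in Set.Ioo (0:ℝ) 1, g (c * σ) =
      ∫⁻ s in Set.Ioo (0:ℝ) c, g s ∂(ENNReal.ofReal |c⁻¹| • volume) := by
    rw [← hmap, Measure.restrict_map (measurable_const_mul c) measurableSet_Ioo, hpre,
      lintegral_map hg (measurable_const_mul c)]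
  rw [h1]
  simp only [Measure.restrict_smul, lintegral_smul_measure, smul_eq_mul]
  rw [← mul_assoc, ← ENNReal.ofReal_mul hc.le, abs_of_pos (inv_pos.mpr hc),
    mul_inv_cancel₀ hc.ne', ENNReal.ofReal_one, one_mul]

section PLOne

variable {F : ℝ → ℝ≥0∞}

/-- the level-measure function -/
private noncomputable def lev (F : ℝ → ℝ≥0∞) (s : ℝ) : ℝ≥0∞ :=
  volume {x : ℝ | ENNReal.ofReal s < F x}

private lemma lev_antitone (F : ℝ → ℝ≥0∞) : Antitone (lev F) := by
  intro s s' hss'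
  exact measure_mono fun x hx => lt_of_le_of_lt (ENNReal.ofReal_le_ofReal hss') hx

private lemma lev_measurable (F : ℝ → ℝ≥0∞) : Measurable (lev F) :=
  (lev_antitone F).measurable

/-- truncated layercake integral equals full integral -/
private lemma lev_eq_zero {M : ℝ≥0∞} (hM : M = ⨆ x, F x) {s : ℝ} (hs : M ≤ ENNReal.ofReal s) :
    lev F s = 0 := by
  have : {x : ℝ | ENNReal.ofReal s < F x} = ∅ := by
    ext x
    simp only [Set.mem_setOf_eq, Set.mem_empty_iff_false, iff_false, not_lt]
    exact le_trans (le_trans (le_iSup F x) hM.symm.le) hs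
  rw [lev, this, measure_empty]

lemma pl_one {t : ℝ} (ht : 0 < t) (ht1 : t < 1) {F G H : ℝ → ℝ≥0∞}
    (hF : Measurable F) (hG : Measurable G) (hH : Measurable H)
    (hyp : ∀ x y : ℝ, F x ^ (1-t) * G y ^ t ≤ H ((1-t) * x + t * y)) :
    (∫⁻ x, F x) ^ (1-t) * (∫⁻ x, G x) ^ t ≤ ∫⁻ x, H x := by
  have h1t : (0:ℝ) < 1 - t := by linarith
  rcases eq_or_ne (⨆ x, F x) 0 with hM0 | hM0
  · have : ∀ x, F x = 0 := fun x => le_antisymm (le_trans (le_iSup F x) hM0.le) (zero_le)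
    have hint : ∫⁻ x, F x = 0 := by simp [this]
    rw [hint, ENNReal.zero_rpow_of_pos h1t, zero_mul]
    exact zero_le
  rcases eq_or_ne (⨆ x, G x) 0 with hN0 | hN0
  · have : ∀ x, G x = 0 := fun x => le_antisymm (le_trans (le_iSup G x) hN0.le) (zero_le)
    have hint : ∫⁻ x, G x = 0 := by simp [this]
    rw [hint, ENNReal.zero_rpow_of_pos ht, mul_zero]
    exact zero_le
  set M := ⨆ x, F x with hM
  set N := ⨆ x, G x with hN
  set m : ℕ → ℝ := fun k => if M = ⊤ then (k+1 : ℕ) else M.toReal with hm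
  set n : ℕ → ℝ := fun k => if N = ⊤ then (k+1 : ℕ) else N.toReal with hn
  have hm_pos : ∀ k, 0 < m k := by
    intro k; rw [hm]; dsimp only
    split
    · positivity
    · exact ENNReal.toReal_pos hM0 (by assumption)
  have hn_pos : ∀ k, 0 < n k := by
    intro k; rw [hn]; dsimp only
    split
    · positivity
    · exact ENNReal.toReal_pos hN0 (by assumption)
  have hm_le : ∀ k, ENNReal.ofReal (m k) ≤ M := by
    intro k; rw [hm]; dsimp only
    split
    · next h => rw [h]; exact le_top
    · next h => rw [ENNReal.ofReal_toReal h]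
  have hn_le : ∀ k, ENNReal.ofReal (n k) ≤ N := by
    intro k; rw [hn]; dsimp only
    split
    · next h => rw [h]; exact le_top
    · next h => rw [ENNReal.ofReal_toReal h]
  -- key inequality for each pair of truncation levels
  have key : ∀ k j : ℕ, (∫⁻ s in Set.Ioo 0 (m k), lev F s) ^ (1-t) *
      (∫⁻ s in Set.Ioo 0 (n j), lev G s) ^ t ≤ ∫⁻ x, H x := by
    intro k j
    set mk := m k with hmk
    set nj := n j with hnj
    have hmkpos := hm_pos k
    have hnjpos := hn_pos j
    set K : ℝ := mk ^ (1-t) * nj ^ t with hK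
    have hKpos : 0 < K := by positivity
    -- the level inclusion inequality
    have level : ∀ σ : ℝ, σ ∈ Set.Ioo (0:ℝ) 1 →
        ENNReal.ofReal (1-t) * lev F (mk * σ) + ENNReal.ofReal t * lev G (nj * σ) ≤
          lev H (K * σ) := by
      intro σ hσ
      obtain ⟨hσ0, hσ1⟩ := hσ
      have hAne : {x : ℝ | ENNReal.ofReal (mk * σ) < F x}.Nonempty := by
        have hlt : ENNReal.ofReal (mk * σ) < M := by
          refine lt_of_lt_of_le ?_ (hm_le k)
          rw [ENNReal.ofReal_lt_ofReal_iff hmkpos]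
          nlinarith
        obtain ⟨x, hx⟩ := lt_iSup_iff.mp (hM ▸ hlt)
        exact ⟨x, hx⟩
      have hBne : {x : ℝ | ENNReal.ofReal (nj * σ) < G x}.Nonempty := by
        have hlt : ENNReal.ofReal (nj * σ) < N := by
          refine lt_of_lt_of_le ?_ (hn_le j)
          rw [ENNReal.ofReal_lt_ofReal_iff hnjpos]
          nlinarith
        obtain ⟨x, hx⟩ := lt_iSup_iff.mp (hN ▸ hlt)
        exact ⟨x, hx⟩
      refine bm_one_dim (hF measurableSet_Ioi) (hG measurableSet_Ioi) hAne hBne h1t ht ?_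
      intro a ha b hb
      simp only [Set.mem_setOf_eq] at ha hb ⊢
      have heq : ENNReal.ofReal (K * σ) =
          ENNReal.ofReal (mk * σ) ^ (1-t) * ENNReal.ofReal (nj * σ) ^ t := by
        rw [ENNReal.ofReal_rpow_of_pos (by positivity), ENNReal.ofReal_rpow_of_pos (by positivity),
          ← ENNReal.ofReal_mul (by positivity)]
        congr 1
        rw [Real.mul_rpow hmkpos.le hσ0.le, Real.mul_rpow hnjpos.le hσ0.le]
        have : σ ^ (1-t) * σ ^ t = σ := by
          rw [← Real.rpow_add hσ0]; norm_num
        nlinarith [this]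
      calc ENNReal.ofReal (K * σ)
          = ENNReal.ofReal (mk * σ) ^ (1-t) * ENNReal.ofReal (nj * σ) ^ t := heq
        _ < F a ^ (1-t) * G b ^ t :=
            ENNReal.mul_lt_mul (ENNReal.rpow_lt_rpow ha h1t) (ENNReal.rpow_lt_rpow hb ht)
        _ ≤ H ((1-t) * a + t * b) := hyp a b
    -- rescale the truncated integrals
    have hPscale : ∫⁻ s in Set.Ioo 0 mk, lev F s =
        ENNReal.ofReal mk * ∫⁻ σ in Set.Ioo (0:ℝ) 1, lev F (mk * σ) :=
      lintegral_Ioo_scale hmkpos (lev_measurable F)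
    have hQscale : ∫⁻ s in Set.Ioo 0 nj, lev G s =
        ENNReal.ofReal nj * ∫⁻ σ in Set.Ioo (0:ℝ) 1, lev G (nj * σ) :=
      lintegral_Ioo_scale hnjpos (lev_measurable G)
    set X := ∫⁻ σ in Set.Ioo (0:ℝ) 1, lev F (mk * σ) with hX
    set Y := ∫⁻ σ in Set.Ioo (0:ℝ) 1, lev G (nj * σ) with hY
    have hHbound : ENNReal.ofReal K * (ENNReal.ofReal (1-t) * X + ENNReal.ofReal t * Y) ≤
        ∫⁻ x, H x := by
      have step1 : ∫⁻ x, H x ≥ ∫⁻ s in Set.Ioo 0 K, lev H s := by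
        rw [layercake_ennreal volume hH]
        exact lintegral_mono' (Measure.restrict_mono Set.Ioo_subset_Ioi_self le_rfl) le_rfl
      have step2 : ∫⁻ s in Set.Ioo 0 K, lev H s =
          ENNReal.ofReal K * ∫⁻ σ in Set.Ioo (0:ℝ) 1, lev H (K * σ) :=
        lintegral_Ioo_scale hKpos (lev_measurable H)
      have step3 : ∫⁻ σ in Set.Ioo (0:ℝ) 1,
          (ENNReal.ofReal (1-t) * lev F (mk * σ) + ENNReal.ofReal t * lev G (nj * σ)) ≤
          ∫⁻ σ in Set.Ioo (0:ℝ) 1, lev H (K * σ) := by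
        refine setLIntegral_mono ((lev_measurable H).comp (measurable_const_mul K)) level
      have step4 : ∫⁻ σ in Set.Ioo (0:ℝ) 1,
          (ENNReal.ofReal (1-t) * lev F (mk * σ) + ENNReal.ofReal t * lev G (nj * σ)) =
          ENNReal.ofReal (1-t) * X + ENNReal.ofReal t * Y := by
        have hmF : Measurable fun σ : ℝ => lev F (mk * σ) :=
          (lev_measurable F).comp (measurable_const_mul mk)
        have hmG : Measurable fun σ : ℝ => lev G (nj * σ) :=
          (lev_measurable G).comp (measurable_const_mul nj)
        rw [lintegral_add_left (hmF.const_mul _), lintegral_const_mul _ hmF,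
          lintegral_const_mul _ hmG]
      calc ENNReal.ofReal K * (ENNReal.ofReal (1-t) * X + ENNReal.ofReal t * Y)
          = ENNReal.ofReal K * ∫⁻ σ in Set.Ioo (0:ℝ) 1,
            (ENNReal.ofReal (1-t) * lev F (mk * σ) + ENNReal.ofReal t * lev G (nj * σ)) := by
            rw [step4]
        _ ≤ ENNReal.ofReal K * ∫⁻ σ in Set.Ioo (0:ℝ) 1, lev H (K * σ) :=
            mul_le_mul_right step3 _
        _ = ∫⁻ s in Set.Ioo 0 K, lev H s := step2.symm
        _ ≤ ∫⁻ x, H x := step1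
    calc (∫⁻ s in Set.Ioo 0 mk, lev F s) ^ (1-t) * (∫⁻ s in Set.Ioo 0 nj, lev G s) ^ t
        = (ENNReal.ofReal mk * X) ^ (1-t) * (ENNReal.ofReal nj * Y) ^ t := by
          rw [hPscale, hQscale]
      _ = ENNReal.ofReal K * (X ^ (1-t) * Y ^ t) := by
          rw [ENNReal.mul_rpow_of_nonneg _ _ h1t.le, ENNReal.mul_rpow_of_nonneg _ _ ht.le,
            ENNReal.ofReal_rpow_of_pos hmkpos, ENNReal.ofReal_rpow_of_pos hnjpos, hK,
            ENNReal.ofReal_mul (by positivity)]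
          ring
      _ ≤ ENNReal.ofReal K * (ENNReal.ofReal (1-t) * X + ENNReal.ofReal t * Y) :=
          mul_le_mul_right (geom_le_arith ht ht1 X Y) _
      _ ≤ ∫⁻ x, H x := hHbound
  -- express the full integrals as suprema of truncated ones
  have trunc : ∀ (F' : ℝ → ℝ≥0∞), Measurable F' → ∀ (m' : ℕ → ℝ),
      (M' : ℝ≥0∞) → M' = ⨆ x, F' x → M' ≠ 0 →
      (∀ k, m' k = if M' = ⊤ then ((k+1:ℕ):ℝ) else M'.toReal) →
      ∫⁻ x, F' x = ⨆ k : ℕ, ∫⁻ s in Set.Ioo 0 (m' k), lev F' s := by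
    intro F' hF' m' M' hM' hM'0 hm'
    rw [layercake_ennreal volume hF']
    rcases eq_or_ne M' ⊤ with hMt | hMt
    · have hmk : ∀ k : ℕ, m' k = ((k+1:ℕ):ℝ) := fun k => by rw [hm' k, if_pos hMt]
      have hmeas : ∀ k : ℕ, Measurable ((Set.Ioo (0:ℝ) (m' k)).indicator (lev F')) :=
        fun k => (lev_measurable F').indicator measurableSet_Ioo
      have hmono : Monotone (fun k : ℕ => (Set.Ioo (0:ℝ) (m' k)).indicator (lev F')) := by
        intro k l hkl
        refine Set.indicator_le_indicator_of_subset (Set.Ioo_subset_Ioo le_rfl ?_)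
          (fun _ => zero_le)
        rw [hmk k, hmk l]
        exact_mod_cast by omega
      have hsup : ∀ s : ℝ, (⨆ k : ℕ, (Set.Ioo (0:ℝ) (m' k)).indicator (lev F') s) =
          (Set.Ioi (0:ℝ)).indicator (lev F') s := by
        intro s
        rcases le_or_gt s 0 with hs | hs
        · have h1 : ∀ k : ℕ, (Set.Ioo (0:ℝ) (m' k)).indicator (lev F') s = 0 :=
            fun k => Set.indicator_of_notMem (fun h => absurd h.1 (not_lt.mpr hs)) _
          have h2 : (Set.Ioi (0:ℝ)).indicator (lev F') s = 0 :=
            Set.indicator_of_notMem (by simpa using hs) _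
          simp [h1, h2]
        · rw [Set.indicator_of_mem (Set.mem_Ioi.mpr hs)]
          apply le_antisymm
          · exact iSup_le fun k => le_trans (Set.indicator_le_self _ _ s) le_rfl
          · obtain ⟨k, hk⟩ := exists_nat_gt s
            have hmem : s ∈ Set.Ioo (0:ℝ) (m' k) := by
              refine ⟨hs, ?_⟩
              rw [hmk k]
              push_cast
              linarith
            calc lev F' s = (Set.Ioo (0:ℝ) (m' k)).indicator (lev F') s :=
                  (Set.indicator_of_mem hmem _).symm
              _ ≤ ⨆ k : ℕ, (Set.Ioo (0:ℝ) (m' k)).indicator (lev F') s :=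
                  le_iSup (fun k : ℕ => (Set.Ioo (0:ℝ) (m' k)).indicator (lev F') s) k
      calc ∫⁻ s in Set.Ioi (0:ℝ), lev F' s
          = ∫⁻ s, (Set.Ioi (0:ℝ)).indicator (lev F') s := by
            rw [lintegral_indicator measurableSet_Ioi]
        _ = ∫⁻ s, ⨆ k : ℕ, (Set.Ioo (0:ℝ) (m' k)).indicator (lev F') s :=
            lintegral_congr fun s => (hsup s).symm
        _ = ⨆ k : ℕ, ∫⁻ s, (Set.Ioo (0:ℝ) (m' k)).indicator (lev F') s :=
            lintegral_iSup hmeas hmono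
        _ = ⨆ k : ℕ, ∫⁻ s in Set.Ioo 0 (m' k), lev F' s := by
            refine iSup_congr fun k => ?_
            rw [lintegral_indicator measurableSet_Ioo]
    · have hmk : ∀ k : ℕ, m' k = M'.toReal := fun k => by rw [hm' k, if_neg hMt]
      have hind : (Set.Ioi (0:ℝ)).indicator (lev F') =
          (Set.Ioo (0:ℝ) M'.toReal).indicator (lev F') := by
        funext s
        by_cases h1 : s ∈ Set.Ioo (0:ℝ) M'.toReal
        · rw [Set.indicator_of_mem h1, Set.indicator_of_mem (Set.mem_Ioi.mpr h1.1)]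
        · by_cases h2 : s ∈ Set.Ioi (0:ℝ)
          · have hsM : M'.toReal ≤ s := by
              by_contra hcon
              exact h1 ⟨h2, lt_of_not_ge hcon⟩
            rw [Set.indicator_of_mem h2, Set.indicator_of_notMem h1,
              lev_eq_zero hM' ?_]
            calc M' = ENNReal.ofReal M'.toReal := (ENNReal.ofReal_toReal hMt).symm
              _ ≤ ENNReal.ofReal s := ENNReal.ofReal_le_ofReal hsM
          · rw [Set.indicator_of_notMem h1, Set.indicator_of_notMem h2]
      calc ∫⁻ s in Set.Ioi (0:ℝ), lev F' s
          = ∫⁻ s, (Set.Ioi (0:ℝ)).indicator (lev F') s := by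
            rw [lintegral_indicator measurableSet_Ioi]
        _ = ∫⁻ s, (Set.Ioo (0:ℝ) M'.toReal).indicator (lev F') s := by rw [hind]
        _ = ∫⁻ s in Set.Ioo (0:ℝ) M'.toReal, lev F' s := by
            rw [lintegral_indicator measurableSet_Ioo]
        _ = ⨆ k : ℕ, ∫⁻ s in Set.Ioo 0 (m' k), lev F' s := by
            have : ∀ k : ℕ, ∫⁻ s in Set.Ioo 0 (m' k), lev F' s =
                ∫⁻ s in Set.Ioo (0:ℝ) M'.toReal, lev F' s := fun k => by rw [hmk k]
            simp only [this]
            exact (ciSup_const).symm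
  have hFsup := trunc F hF m M hM hM0 (fun k => by rw [hm])
  have hGsup := trunc G hG n N hN hN0 (fun k => by rw [hn])
  rw [hFsup, hGsup]
  have hP1 : (⨆ k : ℕ, ∫⁻ s in Set.Ioo 0 (m k), lev F s) ^ (1-t) ≤
      ⨆ k : ℕ, (∫⁻ s in Set.Ioo 0 (m k), lev F s) ^ (1-t) :=
    rpow_iSup_le h1t (fun k => le_iSup (fun k => (∫⁻ s in Set.Ioo 0 (m k), lev F s) ^ (1-t)) k)
  have hQ1 : (⨆ j : ℕ, ∫⁻ s in Set.Ioo 0 (n j), lev G s) ^ t ≤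
      ⨆ j : ℕ, (∫⁻ s in Set.Ioo 0 (n j), lev G s) ^ t :=
    rpow_iSup_le ht (fun j => le_iSup (fun j => (∫⁻ s in Set.Ioo 0 (n j), lev G s) ^ t) j)
  refine le_trans (mul_le_mul' hP1 hQ1) ?_
  rw [ENNReal.iSup_mul]
  refine iSup_le fun k => ?_
  rw [ENNReal.mul_iSup]
  exact iSup_le fun j => key k j

end PLOne

theorem prekopa_leindler (d : ℕ) {t : ℝ} (ht : 0 < t) (ht1 : t < 1)
    (F G H : (Fin d → ℝ) → ℝ≥0∞)
    (hF : Measurable F) (hG : Measurable G) (hH : Measurable H)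
    (hyp : ∀ x y : Fin d → ℝ, F x ^ (1-t) * G y ^ t ≤ H ((1-t) • x + t • y)) :
    (∫⁻ x, F x) ^ (1-t) * (∫⁻ x, G x) ^ t ≤ ∫⁻ x, H x := by
  induction d with
  | zero =>
      have hconstF : F = fun _ => F default := funext fun x => by rw [Subsingleton.elim x default]
      have hconstG : G = fun _ => G default := funext fun x => by rw [Subsingleton.elim x default]
      have hconstH : H = fun _ => H default := funext fun x => by rw [Subsingleton.elim x default]
      have huniv : (volume : Measure (Fin 0 → ℝ)) Set.univ = 1 := by
        rw [MeasureTheory.volume_pi, Measure.pi_univ]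
        simp
      rw [hconstF, hconstG, hconstH, lintegral_const, lintegral_const, lintegral_const, huniv,
        mul_one, mul_one, mul_one]
      have := hyp default default
      rwa [Subsingleton.elim ((1-t) • (default : Fin 0 → ℝ) + t • default) default] at this
  | succ d ih =>
      set e := MeasurableEquiv.piFinSuccAbove (fun _ : Fin (d+1) => ℝ) 0 with he
      have hmp : MeasurePreserving e volume volume :=
        MeasureTheory.volume_preserving_piFinSuccAbove (fun _ : Fin (d+1) => ℝ) 0
      have hmps : MeasurePreserving e.symm volume volume := hmp.symm e
      have he_app : ∀ x : Fin (d+1) → ℝ, e x = (x 0, fun j => x (Fin.succAbove 0 j)) :=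
        fun x => rfl
      have he_lin : ∀ (c c' : ℝ) (x y : Fin (d+1) → ℝ),
          e (c • x + c' • y) = c • e x + c' • e y := by
        intro c c' x y
        rw [he_app, he_app, he_app]
        ext <;> simp [Prod.smul_def]
      have hes_lin : ∀ (c c' : ℝ) (x y : ℝ × (Fin d → ℝ)),
          e.symm (c • x + c' • y) = c • e.symm x + c' • e.symm y := by
        intro c c' x y
        apply e.injective
        rw [he_lin, e.apply_symm_apply, e.apply_symm_apply, e.apply_symm_apply]
      set F' : ℝ × (Fin d → ℝ) → ℝ≥0∞ := F ∘ e.symm with hF'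
      set G' : ℝ × (Fin d → ℝ) → ℝ≥0∞ := G ∘ e.symm with hG'
      set H' : ℝ × (Fin d → ℝ) → ℝ≥0∞ := H ∘ e.symm with hH'
      have hF'm : Measurable F' := hF.comp e.symm.measurable
      have hG'm : Measurable G' := hG.comp e.symm.measurable
      have hH'm : Measurable H' := hH.comp e.symm.measurable
      set F₁ : ℝ → ℝ≥0∞ := fun a => ∫⁻ z, F' (a, z) with hF₁
      set G₁ : ℝ → ℝ≥0∞ := fun a => ∫⁻ z, G' (a, z) with hG₁
      set H₁ : ℝ → ℝ≥0∞ := fun a => ∫⁻ z, H' (a, z) with hH₁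
      have hF₁m : Measurable F₁ :=
        Measurable.lintegral_prod_right (f := fun a z => F' (a, z)) hF'm
      have hG₁m : Measurable G₁ :=
        Measurable.lintegral_prod_right (f := fun a z => G' (a, z)) hG'm
      have hH₁m : Measurable H₁ :=
        Measurable.lintegral_prod_right (f := fun a z => H' (a, z)) hH'm
      have hyp₁ : ∀ a b : ℝ, F₁ a ^ (1-t) * G₁ b ^ t ≤ H₁ ((1-t) * a + t * b) := by
        intro a b
        refine ih (fun z => F' (a, z)) (fun z => G' (b, z))
          (fun z => H' ((1-t) * a + t * b, z))
          (hF'm.comp measurable_prodMk_left) (hG'm.comp measurable_prodMk_left)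
          (hH'm.comp measurable_prodMk_left) ?_
        intro x y
        have harg : ((1-t) * a + t * b, (1-t) • x + t • y) =
            (1-t) • ((a, x) : ℝ × (Fin d → ℝ)) + t • (b, y) := by
          simp [Prod.smul_def, Prod.ext_iff, smul_eq_mul]
        show F' (a, x) ^ (1-t) * G' (b, y) ^ t ≤ H' ((1-t) * a + t * b, (1-t) • x + t • y)
        rw [harg]
        show F (e.symm (a,x)) ^ (1-t) * G (e.symm (b,y)) ^ t ≤ H (e.symm _)
        rw [hes_lin]
        exact hyp _ _
      have hint : ∀ (W : (Fin (d+1) → ℝ) → ℝ≥0∞), Measurable W →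
          ∫⁻ x, W x = ∫⁻ a, ∫⁻ z, (W ∘ e.symm) (a, z) := by
        intro W hW
        rw [← hmps.lintegral_comp hW]
        rw [Measure.volume_eq_prod]
        exact lintegral_prod (fun z => W (e.symm z)) ((hW.comp e.symm.measurable).aemeasurable)
      rw [hint F hF, hint G hG, hint H hH]
      exact pl_one ht ht1 hF₁m hG₁m hH₁m hyp₁

section NormFacts
variable {d : ℕ} {φ : (Fin d → ℝ) → ℝ}

lemma IsNorm.zero (hφ : IsNorm φ) : φ 0 = 0 := by
  have := hφ.smul 0 0
  simpa using this

lemma IsNorm.nonneg (hφ : IsNorm φ) : ∀ x, 0 ≤ φ x := by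
  intro x
  have h1 : φ (x + (-1 : ℝ) • x) ≤ φ x + φ ((-1 : ℝ) • x) := hφ.triangle _ _
  rw [hφ.smul] at h1
  simp at h1
  linarith [h1, hφ.zero]

lemma IsNorm.convex_comb (hφ : IsNorm φ) {p q : ℝ} (hp : 0 ≤ p) (hq : 0 ≤ q) (x y : Fin d → ℝ) :
    φ (p • x + q • y) ≤ p * φ x + q * φ y := by
  calc φ (p • x + q • y) ≤ φ (p • x) + φ (q • y) := hφ.triangle _ _
    _ = p * φ x + q * φ y := by rw [hφ.smul, hφ.smul, abs_of_nonneg hp, abs_of_nonneg hq]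

lemma IsNorm.continuous (hφ : IsNorm φ) : Continuous φ := by
  classical
  set C : ℝ := ∑ i : Fin d, φ (Pi.single i 1) with hC
  have hsingle : ∀ (z : Fin d → ℝ), φ z ≤ ∑ i : Fin d, |z i| * φ (Pi.single i 1) := by
    intro z
    have hz : z = ∑ i : Fin d, (z i) • (Pi.single i 1 : Fin d → ℝ) := by
      funext j
      rw [Finset.sum_apply]
      simp [Pi.single_apply, Finset.sum_ite_eq' Finset.univ j]
    calc φ z = φ (∑ i : Fin d, (z i) • (Pi.single i 1 : Fin d → ℝ)) := by rw [← hz]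
      _ ≤ ∑ i : Fin d, φ ((z i) • (Pi.single i 1 : Fin d → ℝ)) := by
          classical
          refine Finset.le_sum_of_subadditive φ hφ.zero.le hφ.triangle _ _
      _ = ∑ i : Fin d, |z i| * φ (Pi.single i 1) := by
          refine Finset.sum_congr rfl fun i _ => hφ.smul _ _
  have hlip : ∀ x y : Fin d → ℝ, |φ x - φ y| ≤ C * ‖x - y‖ := by
    intro x y
    have h1 : φ x ≤ φ (x - y) + φ y := by
      have := hφ.triangle (x - y) y
      simpa [sub_add_cancel] using this
    have h2 : φ y ≤ φ (x - y) + φ x := by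
      have h3 : φ (y - x) = φ (x - y) := by
        have : y - x = (-1 : ℝ) • (x - y) := by
          ext i
          simp only [Pi.sub_apply, Pi.smul_apply, smul_eq_mul]
          ring
        rw [this, hφ.smul]
        simp
      have := hφ.triangle (y - x) x
      rw [h3] at this
      simpa [sub_add_cancel] using this
    have hxy : φ (x - y) ≤ C * ‖x - y‖ := by
      calc φ (x - y) ≤ ∑ i : Fin d, |(x - y) i| * φ (Pi.single i 1) := hsingle _
        _ ≤ ∑ i : Fin d, ‖x - y‖ * φ (Pi.single i 1) := by
            refine Finset.sum_le_sum fun i _ => ?_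
            refine mul_le_mul_of_nonneg_right ?_ (hφ.nonneg _)
            calc |(x - y) i| = ‖(x - y) i‖ := (Real.norm_eq_abs _).symm
              _ ≤ ‖x - y‖ := norm_le_pi_norm _ i
        _ = C * ‖x - y‖ := by
            rw [hC, Finset.sum_mul]
            exact Finset.sum_congr rfl fun i _ => mul_comm _ _
    rw [abs_sub_le_iff]
    constructor <;> linarith
  have : LipschitzWith (Real.toNNReal C) φ := by
    refine LipschitzWith.of_dist_le_mul fun x y => ?_
    rw [Real.dist_eq, dist_eq_norm]
    refine le_trans (hlip x y) (mul_le_mul_of_nonneg_right ?_ (norm_nonneg _))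
    exact Real.le_coe_toNNReal C
  exact this.continuous

end NormFacts

section Gauss
variable {d : ℕ} {S : Matrix (Fin d) (Fin d) ℝ}

lemma gaussDensity_continuous (S : Matrix (Fin d) (Fin d) ℝ) :
    Continuous (gaussDensity S) := by
  unfold gaussDensity
  refine continuous_const.mul (Real.continuous_exp.comp (continuous_const.mul ?_))
  exact (continuous_pi fun i => continuous_apply i).dotProduct
    ((continuous_const : Continuous fun _ : Fin d → ℝ => S⁻¹).matrix_mulVec
      (continuous_pi fun i => continuous_apply i))

lemma quad_convex (hS : S.PosDef) {p q : ℝ} (hp : 0 ≤ p) (hq : 0 ≤ q) (hpq : p + q = 1)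
    (x y : Fin d → ℝ) :
    (p • x + q • y) ⬝ᵥ (S⁻¹ *ᵥ (p • x + q • y)) ≤ p * (x ⬝ᵥ (S⁻¹ *ᵥ x)) + q * (y ⬝ᵥ (S⁻¹ *ᵥ y)) := by
  have hsym : S⁻¹.IsHermitian := hS.inv.isHermitian
  have hBsymm : ∀ u v : Fin d → ℝ, u ⬝ᵥ (S⁻¹ *ᵥ v) = v ⬝ᵥ (S⁻¹ *ᵥ u) := by
    intro u v
    rw [dotProduct_mulVec, ← mulVec_transpose]
    rw [show S⁻¹ᵀ = S⁻¹ from by simpa [Matrix.IsHermitian] using hsym]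
    exact dotProduct_comm _ _
  have hPSD : ∀ u : Fin d → ℝ, 0 ≤ u ⬝ᵥ (S⁻¹ *ᵥ u) := by
    intro u
    have := hS.inv.posSemidef.dotProduct_mulVec_nonneg u
    simpa using this
  set Qx := x ⬝ᵥ (S⁻¹ *ᵥ x)
  set Qy := y ⬝ᵥ (S⁻¹ *ᵥ y)
  set B := x ⬝ᵥ (S⁻¹ *ᵥ y)
  have hexp : (p • x + q • y) ⬝ᵥ (S⁻¹ *ᵥ (p • x + q • y)) =
      p^2 * Qx + 2*(p*q)*B + q^2 * Qy := by
    rw [mulVec_add, mulVec_smul, mulVec_smul, add_dotProduct, smul_dotProduct, smul_dotProduct,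
      dotProduct_add, dotProduct_add, dotProduct_smul, dotProduct_smul, dotProduct_smul,
      dotProduct_smul]
    have := hBsymm y x
    simp only [smul_eq_mul]
    rw [this]
    ring
  have hxy : 0 ≤ Qx - 2*B + Qy := by
    have h := hPSD (x - y)
    have hexp2 : (x - y) ⬝ᵥ (S⁻¹ *ᵥ (x - y)) = Qx - 2*B + Qy := by
      rw [mulVec_sub, sub_dotProduct, dotProduct_sub, dotProduct_sub]
      have := hBsymm y x
      rw [this]
      ring
    rw [hexp2] at h
    linarith
  rw [hexp]
  have hq' : q = 1 - p := by linarith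
  subst hq'
  have hp1 : (0:ℝ) ≤ 1 - p := by linarith
  nlinarith [mul_nonneg (mul_nonneg hp hp1) hxy]

lemma gaussDensity_pos (hS : S.PosDef) (x : Fin d → ℝ) : 0 < gaussDensity S x := by
  unfold gaussDensity
  have hdet : 0 < S.det := hS.det_pos
  have h1 : 0 < (2 * Real.pi) ^ d * S.det := by positivity
  have h2 : 0 < Real.sqrt ((2 * Real.pi) ^ d * S.det) := Real.sqrt_pos.mpr h1
  positivity

lemma gaussDensity_log_concave (hS : S.PosDef) {p q : ℝ} (hp : 0 ≤ p) (hq : 0 ≤ q)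
    (hpq : p + q = 1) (x y : Fin d → ℝ) :
    ENNReal.ofReal (gaussDensity S x) ^ p * ENNReal.ofReal (gaussDensity S y) ^ q ≤
      ENNReal.ofReal (gaussDensity S (p • x + q • y)) := by
  have hx := gaussDensity_pos hS x
  have hy := gaussDensity_pos hS y
  rw [ENNReal.ofReal_rpow_of_pos hx, ENNReal.ofReal_rpow_of_pos hy,
    ← ENNReal.ofReal_mul (by positivity)]
  refine ENNReal.ofReal_le_ofReal ?_
  unfold gaussDensity
  set Z : ℝ := (Real.sqrt ((2 * Real.pi) ^ d * S.det))⁻¹ with hZ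
  have hZpos : 0 < Z := by
    have hdet : 0 < S.det := hS.det_pos
    have h1 : 0 < (2 * Real.pi) ^ d * S.det := by positivity
    have h2 : 0 < Real.sqrt ((2 * Real.pi) ^ d * S.det) := Real.sqrt_pos.mpr h1
    positivity
  have hexpand : ∀ u : Fin d → ℝ,
      (Z * Real.exp (-(1/2) * (u ⬝ᵥ (S⁻¹ *ᵥ u)))) = Z * Real.exp (-(1/2) * (u ⬝ᵥ (S⁻¹ *ᵥ u))) :=
    fun _ => rfl
  have key : (Z * Real.exp (-(1/2) * (x ⬝ᵥ (S⁻¹ *ᵥ x)))) ^ p *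
      (Z * Real.exp (-(1/2) * (y ⬝ᵥ (S⁻¹ *ᵥ y)))) ^ q ≤
      Z * Real.exp (-(1/2) * ((p • x + q • y) ⬝ᵥ (S⁻¹ *ᵥ (p • x + q • y)))) := by
    have hZexp : ∀ u : Fin d → ℝ, 0 < Real.exp (-(1/2) * (u ⬝ᵥ (S⁻¹ *ᵥ u))) := fun u => Real.exp_pos _
    rw [Real.mul_rpow hZpos.le (hZexp x).le, Real.mul_rpow hZpos.le (hZexp y).le]
    have hZ1 : Z ^ p * Z ^ q = Z := by
      rw [← Real.rpow_add hZpos, hpq, Real.rpow_one]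
    have hexp1 : Real.exp (-(1/2) * (x ⬝ᵥ (S⁻¹ *ᵥ x))) ^ p = Real.exp (p * (-(1/2) * (x ⬝ᵥ (S⁻¹ *ᵥ x)))) := by
      rw [← Real.exp_mul]; ring_nf
    have hexp2 : Real.exp (-(1/2) * (y ⬝ᵥ (S⁻¹ *ᵥ y))) ^ q = Real.exp (q * (-(1/2) * (y ⬝ᵥ (S⁻¹ *ᵥ y)))) := by
      rw [← Real.exp_mul]; ring_nf
    rw [hexp1, hexp2]
    calc Z ^ p * Real.exp (p * (-(1/2) * (x ⬝ᵥ (S⁻¹ *ᵥ x)))) *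
          (Z ^ q * Real.exp (q * (-(1/2) * (y ⬝ᵥ (S⁻¹ *ᵥ y)))))
        = (Z ^ p * Z ^ q) * (Real.exp (p * (-(1/2) * (x ⬝ᵥ (S⁻¹ *ᵥ x)))) *
            Real.exp (q * (-(1/2) * (y ⬝ᵥ (S⁻¹ *ᵥ y))))) := by ring
      _ = Z * Real.exp (p * (-(1/2) * (x ⬝ᵥ (S⁻¹ *ᵥ x))) + q * (-(1/2) * (y ⬝ᵥ (S⁻¹ *ᵥ y)))) := by
          rw [hZ1, Real.exp_add]
      _ ≤ Z * Real.exp (-(1/2) * ((p • x + q • y) ⬝ᵥ (S⁻¹ *ᵥ (p • x + q • y)))) := by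
          refine mul_le_mul_of_nonneg_left (Real.exp_le_exp.mpr ?_) hZpos.le
          have := quad_convex hS hp hq hpq x y
          nlinarith
  exact key
end Gauss

section KeyLemma

variable {d : ℕ} {φ : (Fin d → ℝ) → ℝ} {S : Matrix (Fin d) (Fin d) ℝ}

lemma gauss_translate_quasiconcave (hφ : IsNorm φ) (hS : S.PosDef) {c : ℝ} {p q : ℝ}
    (hp : 0 < p) (hq : 0 < q) (hpq : p + q = 1) (w₁ w₂ : Fin d → ℝ) :
    min (gaussMeasure S {ω : Fin d → ℝ | φ (ω + w₁) ≤ c})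
      (gaussMeasure S {ω : Fin d → ℝ | φ (ω + w₂) ≤ c}) ≤
      gaussMeasure S {ω : Fin d → ℝ | φ (ω + (p • w₁ + q • w₂)) ≤ c} := by
  classical
  set ρ : (Fin d → ℝ) → ℝ≥0∞ := fun x => ENNReal.ofReal (gaussDensity S x) with hρ
  have hρm : Measurable ρ :=
    ENNReal.measurable_ofReal.comp (gaussDensity_continuous S).measurable
  have hAmeas : ∀ w : Fin d → ℝ, MeasurableSet {ω : Fin d → ℝ | φ (ω + w) ≤ c} := by
    intro w
    have : {ω : Fin d → ℝ | φ (ω + w) ≤ c} = (fun ω => φ (ω + w)) ⁻¹' Set.Iic c := rfl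
    rw [this]
    exact (IsClosed.preimage (hφ.continuous.comp (continuous_id.add continuous_const))
      isClosed_Iic).measurableSet
  have happly : ∀ w : Fin d → ℝ, gaussMeasure S {ω : Fin d → ℝ | φ (ω + w) ≤ c} =
      ∫⁻ x, ({ω : Fin d → ℝ | φ (ω + w) ≤ c}.indicator ρ) x := by
    intro w
    rw [gaussMeasure, withDensity_apply _ (hAmeas w), ← lintegral_indicator (hAmeas w)]
  set w := p • w₁ + q • w₂ with hw
  have hpq' : (1:ℝ) - q = p := by linarith
  have hyp : ∀ x y : Fin d → ℝ,
      ({ω : Fin d → ℝ | φ (ω + w₁) ≤ c}.indicator ρ) x ^ (1-q) *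
      ({ω : Fin d → ℝ | φ (ω + w₂) ≤ c}.indicator ρ) y ^ q ≤
      ({ω : Fin d → ℝ | φ (ω + w) ≤ c}.indicator ρ) ((1-q) • x + q • y) := by
    intro x y
    rw [hpq']
    by_cases hx : x ∈ {ω : Fin d → ℝ | φ (ω + w₁) ≤ c}
    · by_cases hy : y ∈ {ω : Fin d → ℝ | φ (ω + w₂) ≤ c}
      · rw [Set.indicator_of_mem hx, Set.indicator_of_mem hy]
        have hz : p • x + q • y ∈ {ω : Fin d → ℝ | φ (ω + w) ≤ c} := by
          simp only [Set.mem_setOf_eq] at hx hy ⊢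
          have harr : p • x + q • y + w = p • (x + w₁) + q • (y + w₂) := by
            rw [hw, smul_add, smul_add]
            abel
          rw [harr]
          calc φ (p • (x + w₁) + q • (y + w₂)) ≤ p * φ (x + w₁) + q * φ (y + w₂) :=
                hφ.convex_comb hp.le hq.le _ _
            _ ≤ p * c + q * c :=
                add_le_add (mul_le_mul_of_nonneg_left hx hp.le)
                  (mul_le_mul_of_nonneg_left hy hq.le)
            _ = c := by rw [← add_mul, hpq, one_mul]
        rw [Set.indicator_of_mem hz]
        exact gaussDensity_log_concave hS hp.le hq.le hpq x y
      · rw [Set.indicator_of_notMem hy, ENNReal.zero_rpow_of_pos hq, mul_zero]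
        exact zero_le
    · rw [Set.indicator_of_notMem hx, ENNReal.zero_rpow_of_pos hp, zero_mul]
      exact zero_le
  have hPL := prekopa_leindler d hq (by linarith)
    ({ω : Fin d → ℝ | φ (ω + w₁) ≤ c}.indicator ρ)
    ({ω : Fin d → ℝ | φ (ω + w₂) ≤ c}.indicator ρ)
    ({ω : Fin d → ℝ | φ (ω + w) ≤ c}.indicator ρ)
    (hρm.indicator (hAmeas w₁)) (hρm.indicator (hAmeas w₂)) (hρm.indicator (hAmeas w)) hyp
  rw [hpq'] at hPL
  rw [← happly, ← happly, ← happly] at hPL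
  set ν₁ := gaussMeasure S {ω : Fin d → ℝ | φ (ω + w₁) ≤ c}
  set ν₂ := gaussMeasure S {ω : Fin d → ℝ | φ (ω + w₂) ≤ c}
  set m := min ν₁ ν₂ with hm
  rcases eq_or_ne m 0 with hm0 | hm0
  · rw [hm0]; exact zero_le
  rcases eq_or_ne m ⊤ with hmt | hmt
  · have h1 : ν₁ = ⊤ := by
      have := min_le_left ν₁ ν₂
      rw [← hm, hmt] at this
      exact top_le_iff.mp this
    have h2 : ν₂ = ⊤ := by
      have := min_le_right ν₁ ν₂
      rw [← hm, hmt] at this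
      exact top_le_iff.mp this
    refine le_trans ?_ hPL
    rw [h1, h2, ENNReal.top_rpow_of_pos hp, ENNReal.top_rpow_of_pos hq]
    exact le_top
  calc m = m ^ ((1:ℝ)) := (ENNReal.rpow_one m).symm
    _ = m ^ (p + q) := by rw [hpq]
    _ = m ^ p * m ^ q := ENNReal.rpow_add p q hm0 hmt
    _ ≤ ν₁ ^ p * ν₂ ^ q :=
        mul_le_mul' (ENNReal.rpow_le_rpow (min_le_left _ _) hp.le)
          (ENNReal.rpow_le_rpow (min_le_right _ _) hq.le)
    _ ≤ _ := hPL

end KeyLemma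


/-- The multiplicative factor measure is quasi-concave: every superlevel set
`{x : Γ_mf(x) ≥ a}` (for `a ∈ [0,∞]`) is convex. -/
theorem gammaMF_quasiConcave (d : ℕ) (φ : (Fin d → ℝ) → ℝ) (hφ : IsNorm φ)
    (S : Matrix (Fin d) (Fin d) ℝ) (hS : S.PosDef) (c : ℝ) (hc : 0 < c)
    (τ : ℝ) (hτ0 : 0 < τ)
    (hτ1 : ENNReal.ofReal τ < gaussMeasure S {ω : Fin d → ℝ | φ ω ≤ c})
    (a : ℝ≥0∞) :
    Convex ℝ {x : Fin d → ℝ | a ≤ gammaMF φ S c τ x} := by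
  intro x hx y hy p q hp hq hpq
  simp only [Set.mem_setOf_eq] at hx hy ⊢
  refine le_sInf ?_
  rintro b ⟨s, ⟨hs0, hsτ⟩, rfl⟩
  by_contra hcon
  push_neg at hcon
  have hgt : ∀ z : Fin d → ℝ, a ≤ gammaMF φ S c τ z →
      ENNReal.ofReal τ < gaussMeasure S {ω : Fin d → ℝ | φ (ω + s • z) ≤ c} := by
    intro z hz
    by_contra hle
    push_neg at hle
    have hmem : ENNReal.ofReal s ∈ ENNReal.ofReal ''
        {s : ℝ | 0 ≤ s ∧ gaussMeasure S {ω : Fin d → ℝ | φ (ω + s • z) ≤ c} ≤ ENNReal.ofReal τ} :=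
      ⟨s, ⟨hs0, hle⟩, rfl⟩
    have hles : gammaMF φ S c τ z ≤ ENNReal.ofReal s := sInf_le hmem
    exact absurd (le_trans hz hles) (not_le.mpr hcon)
  have hxgt := hgt x hx
  have hygt := hgt y hy
  rcases eq_or_lt_of_le hp with hp0 | hp0
  · have hq1 : q = 1 := by linarith
    have : p • x + q • y = y := by rw [← hp0, hq1, zero_smul, one_smul, zero_add]
    rw [this] at hsτ
    exact absurd hsτ (not_le.mpr hygt)
  rcases eq_or_lt_of_le hq with hq0 | hq0
  · have hp1 : p = 1 := by linarith
    have : p • x + q • y = x := by rw [← hq0, hp1, zero_smul, one_smul, add_zero]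
    rw [this] at hsτ
    exact absurd hsτ (not_le.mpr hxgt)
  have harr : s • (p • x + q • y) = p • (s • x) + q • (s • y) := by
    rw [smul_add, smul_comm s p, smul_comm s q]
  have hkey := gauss_translate_quasiconcave hφ hS (c := c) hp0 hq0 hpq (s • x) (s • y)
  rw [← harr] at hkey
  have hmin : ENNReal.ofReal τ < min (gaussMeasure S {ω : Fin d → ℝ | φ (ω + s • x) ≤ c})
      (gaussMeasure S {ω : Fin d → ℝ | φ (ω + s • y) ≤ c}) := lt_min hxgt hygt
  exact absurd hsτ (not_le.mpr (lt_of_lt_of_le hmin hkey))
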